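/- Let a < b, let f : ℝ → ℝ → ℝ be continuous and satisfy |f(t,u₁) − f(t,u₂)| ≤ L|u₁ − u₂| for all t ∈ [a,b] and u₁,u₂ ∈ ℝ, and let u : [a,b] → ℝ be continuously differentiable with u'(t) = f(t,u(t)) on [a,b]. Fix reals b₁, b₂, c₂, a₂₁ with b₁ + b₂ = 1, a₂₁ = c₂ and b₂c₂ = 1/2, and fix M ≥ 0. For each N ≥ 1 set h = (b−a)/N, t_n = a + nh, choose shape parameters e_n ∈ ℝ with |e_n| ≤ M for 0 ≤ n ≤ N−1, and define v₀ = u(a) and v_{n+1} = v_n + h(b₁k₁ + b₂k₂), where k₁ = f(t_n, v_n) and k₂ = f(t_n + c₂h, v_n·exp(−e_n(a₂₁h)²) + h a₂₁ k₁). Then max_{0 ≤ n ≤ N} |v_n − u(t_n)| → 0 as N → ∞ (uniformly over all admissible choices of the e_n). -/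

import Mathlib

set_option maxHeartbeats 1000000


/-- Convergence of the two-stage RBF Runge–Kutta method with bounded shape
parameters, uniformly over all admissible choices of the shape parameters. -/
theorem stmt_0 (a b L : ℝ) (hab : a < b)
    (f : ℝ → ℝ → ℝ)
    (hfc : Continuous (fun p : ℝ × ℝ => f p.1 p.2))
    (hlip : ∀ t ∈ Set.Icc a b, ∀ u₁ u₂ : ℝ, |f t u₁ - f t u₂| ≤ L * |u₁ - u₂|)
    (u : ℝ → ℝ)
    (hu : ∀ t ∈ Set.Icc a b, HasDerivAt u (f t (u t)) t)
    (b₁ b₂ c₂ a₂₁ : ℝ)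
    (hb : b₁ + b₂ = 1) (ha21 : a₂₁ = c₂) (hoc : b₂ * c₂ = 1 / 2)
    (M : ℝ) (hM : 0 ≤ M) :
    ∀ ε > 0, ∃ N₀ : ℕ, ∀ N : ℕ, N₀ ≤ N → 1 ≤ N →
      ∀ e : ℕ → ℝ, (∀ n < N, |e n| ≤ M) →
      ∀ v : ℕ → ℝ, v 0 = u a →
      (∀ n < N,
        v (n + 1) = v n + ((b - a) / N) *
          (b₁ * f (a + n * ((b - a) / N)) (v n) +
           b₂ * f (a + n * ((b - a) / N) + c₂ * ((b - a) / N))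
             (v n * Real.exp (-(e n) * (a₂₁ * ((b - a) / N)) ^ 2) +
              ((b - a) / N) * a₂₁ * f (a + n * ((b - a) / N)) (v n)))) →
      ∀ n ≤ N, |v n - u (a + n * ((b - a) / N))| < ε := by
  intro ε hε
  have hba : (0:ℝ) < b - a := sub_pos.mpr hab
  set L' : ℝ := max L 0 with hL'def
  have hL'0 : 0 ≤ L' := le_max_right _ _
  have hlip' : ∀ t ∈ Set.Icc a b, ∀ u₁ u₂ : ℝ, |f t u₁ - f t u₂| ≤ L' * |u₁ - u₂| :=
    fun t ht u₁ u₂ => (hlip t ht u₁ u₂).trans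
      (mul_le_mul_of_nonneg_right (le_max_left _ _) (abs_nonneg _))
  have hucont : ContinuousOn u (Set.Icc a b) :=
    fun t ht => ((hu t ht).continuousAt).continuousWithinAt
  obtain ⟨U0, hU0⟩ := isCompact_Icc.exists_bound_of_continuousOn hucont
  set U : ℝ := max U0 0 with hUdef
  have hU0' : (0:ℝ) ≤ U := le_max_right _ _
  have hUb : ∀ t ∈ Set.Icc a b, |u t| ≤ U := fun t ht =>
    (le_trans (le_of_eq (Real.norm_eq_abs _).symm) (hU0 t ht)).trans (le_max_left _ _)
  -- bound for f on a first compact set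
  have hK0c : IsCompact ((Set.Icc (a-1) (b+1)) ×ˢ (Set.Icc (-(U+1)) (U+1))) :=
    isCompact_Icc.prod isCompact_Icc
  obtain ⟨F0, hF0⟩ := hK0c.exists_bound_of_continuousOn hfc.continuousOn
  set F : ℝ := max F0 0 with hFdef
  have hF0' : (0:ℝ) ≤ F := le_max_right _ _
  have hFb : ∀ t x : ℝ, t ∈ Set.Icc (a-1) (b+1) → |x| ≤ U + 1 → |f t x| ≤ F := by
    intro t x ht hx
    have hmem : ((t, x) : ℝ × ℝ) ∈ (Set.Icc (a-1) (b+1)) ×ˢ (Set.Icc (-(U+1)) (U+1)) := by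
      refine ⟨ht, ?_⟩
      have := abs_le.mp hx
      exact ⟨this.1, this.2⟩
    have := hF0 (t, x) hmem
    rw [Real.norm_eq_abs] at this
    exact this.trans (le_max_left _ _)
  set B : ℝ := 3*(U+1) + |a₂₁| *F + U + 1 with hBdef
  have hBU : U + 1 ≤ B := by
    have h1 : 0 ≤ |a₂₁| *F := mul_nonneg (abs_nonneg _) hF0'
    nlinarith
  set K : Set (ℝ × ℝ) := (Set.Icc (a-1) (b+1)) ×ˢ (Set.Icc (-B) B) with hKdef
  have hKc : IsCompact K := isCompact_Icc.prod isCompact_Icc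
  set Λ : ℝ := (|b₁| + |b₂| * (3 + |a₂₁| * L')) * L' + 1 with hΛdef
  have hΛaux : 0 ≤ (|b₁| + |b₂| * (3 + |a₂₁| * L')) * L' := by
    have h1 : 0 ≤ |a₂₁| * L' := mul_nonneg (abs_nonneg _) hL'0
    have h2 : 0 ≤ |b₂| * (3 + |a₂₁| * L') := mul_nonneg (abs_nonneg _) (by linarith)
    exact mul_nonneg (by positivity) hL'0
  have hΛ1 : 1 ≤ Λ := by rw [hΛdef]; linarith
  have hΛ0 : 0 < Λ := lt_of_lt_of_le one_pos hΛ1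
  set G : ℝ := Real.exp (Λ * (b - a)) with hGdef
  have hG1 : (1:ℝ) ≤ G := Real.one_le_exp (by positivity)
  have hG0 : (0:ℝ) < G := lt_of_lt_of_le one_pos hG1
  set ε₂ : ℝ := min ε 1 / (2 * (b - a) * G) with hε₂def
  have hmin0 : 0 < min ε 1 := lt_min hε one_pos
  have hε₂0 : 0 < ε₂ := div_pos hmin0 (by positivity)
  set ε₁ : ℝ := ε₂ / (1 + 3 * |b₂|) with hε₁def
  have hden : (0:ℝ) < 1 + 3* |b₂| := by positivity
  have hε₁0 : 0 < ε₁ := div_pos hε₂0 hden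
  have hε₁₂ : (1 + 3* |b₂|) * ε₁ = ε₂ := by
    rw [hε₁def]; field_simp
  -- uniform continuity of f on K
  obtain ⟨δ, hδ0, hδ⟩ := (Metric.uniformContinuousOn_iff.mp
    (hKc.uniformContinuousOn_of_continuous hfc.continuousOn)) ε₁ hε₁0
  -- uniform continuity of u on [a,b]
  obtain ⟨δu, hδu0, hδu⟩ := (Metric.uniformContinuousOn_iff.mp
    (isCompact_Icc.uniformContinuousOn_of_continuous hucont)) δ hδ0
  -- threshold for the step size
  set η : ℝ := min 1 (min (1/(M*a₂₁^2+1)) (min δu (min (δ/2) (min (δ/(|c₂|+1))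
    (min (1/(|c₂|+1)) (δ/(2*U + |a₂₁| *F + 1))))))) with hηdef
  have hη0 : 0 < η := by
    refine lt_min one_pos (lt_min (by positivity) (lt_min hδu0 (lt_min (by positivity)
      (lt_min (by positivity) (lt_min (by positivity) (by positivity))))))
  clear_value L' U F B Λ G ε₂ ε₁ η
  refine ⟨Nat.ceil ((b-a)/η) + 1, ?_⟩
  intro N hN hN1 e he v hv0 hrec
  have hNpos : (0:ℝ) < (N:ℝ) := by exact_mod_cast hN1
  set h : ℝ := (b - a) / N with hhdef
  have hh0 : 0 < h := div_pos hba hNpos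
  have hNh : (N:ℝ) * h = b - a := by rw [hhdef]; field_simp
  have hhη : h < η := by
    have h1 : (b-a)/η < (N:ℝ) := by
      have h2 : (b-a)/η ≤ (Nat.ceil ((b-a)/η) : ℝ) := Nat.le_ceil _
      have h3 : (Nat.ceil ((b-a)/η) : ℝ) < (N:ℝ) := by
        have : Nat.ceil ((b-a)/η) < N := lt_of_lt_of_le (Nat.lt_succ_self _) hN
        exact_mod_cast this
      linarith
    rw [hhdef, div_lt_iff₀ hNpos]
    have := (div_lt_iff₀ hη0).mp h1
    linarith [mul_comm η (N:ℝ)]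
  clear_value h
  rw [hηdef] at hhη
  -- individual step-size conditions
  have hh1 : h ≤ 1 := le_of_lt (hhη.trans_le (min_le_left _ _))
  have hhM : h ≤ 1/(M*a₂₁^2+1) :=
    le_of_lt (hhη.trans_le ((min_le_right _ _).trans (min_le_left _ _)))
  have hhδu : h < δu :=
    hhη.trans_le ((min_le_right _ _).trans ((min_le_right _ _).trans (min_le_left _ _)))
  have hhδ2 : h ≤ δ/2 :=
    le_of_lt (hhη.trans_le ((min_le_right _ _).trans ((min_le_right _ _).trans
      ((min_le_right _ _).trans (min_le_left _ _)))))
  have hhc₂δ : h < δ/(|c₂|+1) :=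
    hhη.trans_le ((min_le_right _ _).trans ((min_le_right _ _).trans
      ((min_le_right _ _).trans ((min_le_right _ _).trans (min_le_left _ _)))))
  have hhc₂1 : h ≤ 1/(|c₂|+1) :=
    le_of_lt (hhη.trans_le ((min_le_right _ _).trans ((min_le_right _ _).trans
      ((min_le_right _ _).trans ((min_le_right _ _).trans ((min_le_right _ _).trans
        (min_le_left _ _)))))))
  have hhUF : h < δ/(2*U + |a₂₁| *F + 1) :=
    hhη.trans_le ((min_le_right _ _).trans ((min_le_right _ _).trans
      ((min_le_right _ _).trans ((min_le_right _ _).trans ((min_le_right _ _).trans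
        (min_le_right _ _))))))
  -- derived conditions
  have hMh : M * a₂₁^2 * h ≤ 1 := by
    have hD : (0:ℝ) < M*a₂₁^2+1 := by positivity
    have h1 := (le_div_iff₀ hD).mp hhM
    have h2 : h * (M*a₂₁^2+1) = M*a₂₁^2*h + h := by ring
    linarith
  have hhδ : h < δ := by linarith
  have hc2δ : |c₂| * h < δ := by
    have hD : (0:ℝ) < |c₂|+1 := by positivity
    have h1 := (lt_div_iff₀ hD).mp hhc₂δ
    have h2 : h * (|c₂|+1) = |c₂| * h + h := by ring
    linarith
  have hc21 : |c₂| * h ≤ 1 := by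
    have hD : (0:ℝ) < |c₂|+1 := by positivity
    have h1 := (le_div_iff₀ hD).mp hhc₂1
    have h2 : h * (|c₂|+1) = |c₂| * h + h := by ring
    linarith
  have hUFδ : h * (2*U + |a₂₁| *F) < δ := by
    have hD : (0:ℝ) < 2*U + |a₂₁| *F + 1 := by positivity
    have h1 := (lt_div_iff₀ hD).mp hhUF
    have h2 : h * (2*U + |a₂₁| * F + 1) = h * (2*U + |a₂₁| * F) + h := by ring
    linarith
  -- helper: the uniform bound on the gronwall majorant
  have hhΛ0 : (0:ℝ) ≤ h*Λ := mul_nonneg hh0.le hΛ0.le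
  have hP1 : (1:ℝ) ≤ 1 + h*Λ := by linarith
  have hbound : ∀ m : ℕ, m ≤ N → ε₂ * m * h * (1 + h*Λ)^m ≤ min ε 1 / 2 := by
    intro m hm
    have hmh : (m:ℝ)*h ≤ b - a := by
      rw [← hNh]
      exact mul_le_mul_of_nonneg_right (by exact_mod_cast hm) hh0.le
    have hPexp : (1+h*Λ)^m ≤ G := by
      calc (1+h*Λ)^m ≤ (Real.exp (h*Λ))^m :=
            pow_le_pow_left₀ (by linarith) (by linarith [Real.add_one_le_exp (h*Λ)]) m
        _ = Real.exp ((m:ℝ)*(h*Λ)) := (Real.exp_nat_mul _ m).symm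
        _ ≤ G := by
            rw [hGdef]
            apply Real.exp_le_exp.mpr
            calc (m:ℝ)*(h*Λ) = ((m:ℝ)*h)*Λ := by ring
              _ ≤ (b-a)*Λ := mul_le_mul_of_nonneg_right hmh hΛ0.le
              _ = Λ*(b-a) := by ring
    have h1 : ε₂ * (m:ℝ) * h * (1+h*Λ)^m ≤ ε₂ * (b-a) * G := by
      have e1 : ε₂ * (m:ℝ) * h * (1+h*Λ)^m = ε₂ * ((m:ℝ)*h) * (1+h*Λ)^m := by ring
      rw [e1]
      have hp0 : (0:ℝ) ≤ (1+h*Λ)^m := pow_nonneg (by linarith) m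
      have hq0 : (0:ℝ) ≤ (m:ℝ)*h := mul_nonneg (Nat.cast_nonneg _) hh0.le
      have := mul_le_mul (mul_le_mul_of_nonneg_left hmh hε₂0.le) hPexp hp0
        (mul_nonneg hε₂0.le (by linarith))
      exact this
    have h2 : ε₂ * (b-a) * G = min ε 1 / 2 := by
      have hGne : G ≠ 0 := ne_of_gt hG0
      have hbane : b - a ≠ 0 := ne_of_gt hba
      rw [hε₂def]; field_simp
    linarith
  have hhalf1 : min ε 1 / 2 ≤ 1 := by
    have := min_le_right ε 1; linarith
  -- continuity of s ↦ f s (u s)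
  have hgc : ContinuousOn (fun s => f s (u s)) (Set.Icc a b) := by
    have : ContinuousOn (fun s : ℝ => ((s, u s) : ℝ × ℝ)) (Set.Icc a b) :=
      continuousOn_id.prodMk hucont
    exact hfc.comp_continuousOn this
  -- main induction
  have main : ∀ m : ℕ, m ≤ N → |v m - u (a + m * h)| ≤ ε₂ * m * h * (1 + h*Λ)^m := by
    intro m
    induction m with
    | zero => intro _; simp [hv0]
    | succ n ih =>
      intro hm1
      have hnN : n < N := hm1
      have hnN' : n ≤ N := le_of_lt hnN
      have ihn := ih hnN'
      have hrecn := hrec n hnN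
      set t : ℝ := a + n * h with htdef
      clear_value t
      have hnh0 : (0:ℝ) ≤ (n:ℝ) * h := mul_nonneg (Nat.cast_nonneg _) hh0.le
      have hn1h : ((n:ℝ)+1)*h ≤ b - a := by
        rw [← hNh]
        have : ((n:ℝ)+1) ≤ (N:ℝ) := by exact_mod_cast hm1
        exact mul_le_mul_of_nonneg_right this hh0.le
      have hsplit : ((n:ℝ)+1)*h = (n:ℝ)*h + h := by ring
      have htmem : t ∈ Set.Icc a b := by
        constructor
        · rw [htdef]; linarith
        · rw [htdef]; linarith
      have ht1 : t + h ≤ b := by rw [htdef]; linarith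
      have htmem' : t + h ∈ Set.Icc a b := ⟨by linarith [htmem.1, hh0.le], ht1⟩
      -- error at step n is small
      have hEn : |v n - u t| ≤ min ε 1 / 2 := ihn.trans (hbound n hnN')
      have hEn1 : |v n - u t| ≤ 1 := hEn.trans hhalf1
      have hwU : |u t| ≤ U := hUb t htmem
      have hvb : |v n| ≤ U + 1 := by
        have h1 : |v n| ≤ |v n - u t| + |u t| := by
          calc |v n| = |(v n - u t) + u t| := by ring_nf
            _ ≤ |v n - u t| + |u t| := abs_add_le _ _
        linarith
      set E : ℝ := Real.exp (-e n * (a₂₁ * h) ^ 2) with hEdef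
      have hE0 : 0 < E := Real.exp_pos _
      clear_value E
      have hx : |(-e n * (a₂₁*h)^2)| ≤ M * a₂₁^2 * h^2 := by
        rw [abs_mul, abs_neg]
        have h1 : |e n| ≤ M := he n hnN
        have h2 : |(a₂₁*h)^2| = a₂₁^2*h^2 := by
          rw [abs_of_nonneg (sq_nonneg _)]; ring
        rw [h2]
        have h3 := mul_le_mul_of_nonneg_right h1
          (mul_nonneg (sq_nonneg a₂₁) (sq_nonneg h))
        linarith [h3]
      have hMh2 : M * a₂₁^2 * h^2 ≤ h := by
        calc M * a₂₁^2 * h^2 = (M*a₂₁^2*h)*h := by ring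
          _ ≤ 1*h := mul_le_mul_of_nonneg_right hMh hh0.le
          _ = h := one_mul h
      have hx1 : |(-e n * (a₂₁*h)^2)| ≤ 1 := by linarith
      have hE1 : |E - 1| ≤ 2 * h := by
        have h1 := Real.abs_exp_sub_one_le hx1
        have h2 : M * a₂₁^2 * h^2 ≤ h := hMh2
        rw [hEdef]
        calc |Real.exp (-e n * (a₂₁ * h) ^ 2) - 1| ≤ 2 * |(-e n * (a₂₁*h)^2)| := h1
          _ ≤ 2 * h := by linarith
      have hE3 : E ≤ 3 := by
        have := (abs_le.mp hE1).2
        linarith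
      have hEabs : |E| ≤ 3 := by rw [abs_of_pos hE0]; exact hE3
      -- f-bounds at (t, v n) and (t, u t)
      have htmemw : t ∈ Set.Icc (a-1) (b+1) := ⟨by linarith [htmem.1], by linarith [htmem.2]⟩
      have hfvF : |f t (v n)| ≤ F := hFb t (v n) htmemw hvb
      have hfwF : |f t (u t)| ≤ F := hFb t (u t) htmemw (by linarith)
      set Sv : ℝ := v n * E + h * a₂₁ * f t (v n) with hSvdef
      set Sw : ℝ := u t * E + h * a₂₁ * f t (u t) with hSwdef
      clear_value Sv Sw
      have hSvB : |Sv| ≤ B := by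
        rw [hSvdef]
        have h1 : |v n * E + h * a₂₁ * f t (v n)| ≤ |v n| * |E| + h*(|a₂₁| * |f t (v n)|) := by
          calc |v n * E + h * a₂₁ * f t (v n)| ≤ |v n * E| + |h * a₂₁ * f t (v n)| := abs_add_le _ _
            _ = |v n| * |E| + h*(|a₂₁| * |f t (v n)|) := by
                rw [abs_mul, abs_mul, abs_mul, abs_of_pos hh0]; ring
        have h2 : |v n| * |E| ≤ (U+1)*3 :=
          mul_le_mul hvb hEabs (abs_nonneg _) (by linarith)
        have h3 : h*(|a₂₁| * |f t (v n)|) ≤ 1*(|a₂₁| *F) := by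
          apply mul_le_mul hh1 (mul_le_mul_of_nonneg_left hfvF (abs_nonneg _))
            (mul_nonneg (abs_nonneg _) (abs_nonneg _)) zero_le_one
        rw [hBdef]; linarith
      have hSwB : |Sw| ≤ B := by
        rw [hSwdef]
        have h1 : |u t * E + h * a₂₁ * f t (u t)| ≤ |u t| * |E| + h*(|a₂₁| * |f t (u t)|) := by
          calc |u t * E + h * a₂₁ * f t (u t)| ≤ |u t * E| + |h * a₂₁ * f t (u t)| := abs_add_le _ _
            _ = |u t| * |E| + h*(|a₂₁| * |f t (u t)|) := by
                rw [abs_mul, abs_mul, abs_mul, abs_of_pos hh0]; ring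
        have h2 : |u t| * |E| ≤ (U+1)*3 :=
          mul_le_mul (by linarith) hEabs (abs_nonneg _) (by linarith)
        have h3 : h*(|a₂₁| * |f t (u t)|) ≤ 1*(|a₂₁| *F) := by
          apply mul_le_mul hh1 (mul_le_mul_of_nonneg_left hfwF (abs_nonneg _))
            (mul_nonneg (abs_nonneg _) (abs_nonneg _)) zero_le_one
        rw [hBdef]; linarith
      -- membership in K
      have hmemK : ∀ x : ℝ, |x| ≤ B → ((t, x) : ℝ × ℝ) ∈ K := by
        intro x hx'
        exact ⟨htmemw, (abs_le.mp hx').1, (abs_le.mp hx').2⟩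
      have htc2 : t + c₂*h ∈ Set.Icc (a-1) (b+1) := by
        have h1 : |c₂*h| ≤ 1 := by
          rw [abs_mul, abs_of_pos hh0]; exact hc21
        have := abs_le.mp h1
        exact ⟨by linarith [htmem.1], by linarith [htmem.2]⟩
      have hmemK' : ∀ x : ℝ, |x| ≤ B → ((t + c₂*h, x) : ℝ × ℝ) ∈ K := by
        intro x hx'
        exact ⟨htc2, (abs_le.mp hx').1, (abs_le.mp hx').2⟩
      have hdistf : ∀ p q : ℝ×ℝ, p ∈ K → q ∈ K → dist p q < δ →
          |f p.1 p.2 - f q.1 q.2| < ε₁ := by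
        intro p q hp hq hd
        have := hδ p hp q hq hd
        rwa [Real.dist_eq] at this
      have hc2δ' : dist (t + c₂*h) t < δ := by
        rw [Real.dist_eq]
        have : t + c₂*h - t = c₂*h := by ring
        rw [this, abs_mul, abs_of_pos hh0]
        exact hc2δ
      -- (7) and (9): time-perturbation at stage points
      have h7 : |f (t + c₂*h) Sv - f t Sv| < ε₁ := by
        refine hdistf (t+c₂*h, Sv) (t, Sv) (hmemK' Sv hSvB) (hmemK Sv hSvB) ?_
        rw [Prod.dist_eq]
        exact max_lt hc2δ' (by simpa using hδ0)
      have h9 : |f (t + c₂*h) Sw - f t Sw| < ε₁ := by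
        refine hdistf (t+c₂*h, Sw) (t, Sw) (hmemK' Sw hSwB) (hmemK Sw hSwB) ?_
        rw [Prod.dist_eq]
        exact max_lt hc2δ' (by simpa using hδ0)
      -- (11): consistency of the stage value
      have hSww : |Sw - u t| < δ := by
        have hid : Sw - u t = u t * (E - 1) + h * a₂₁ * f t (u t) := by
          rw [hSwdef]; ring
        rw [hid]
        have h1 : |u t * (E - 1) + h * a₂₁ * f t (u t)| ≤ |u t| * |E-1| + h*(|a₂₁| * |f t (u t)|) := by
          calc |u t * (E - 1) + h * a₂₁ * f t (u t)| ≤ |u t * (E-1)| + |h * a₂₁ * f t (u t)| :=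
              abs_add_le _ _
            _ = |u t| * |E-1| + h*(|a₂₁| * |f t (u t)|) := by
                rw [abs_mul, abs_mul, abs_mul, abs_of_pos hh0]; ring
        have h2 : |u t| * |E-1| ≤ U*(2*h) :=
          mul_le_mul hwU hE1 (abs_nonneg _) hU0'
        have h3 : h*(|a₂₁| * |f t (u t)|) ≤ h*(|a₂₁| *F) :=
          mul_le_mul_of_nonneg_left (mul_le_mul_of_nonneg_left hfwF (abs_nonneg _)) hh0.le
        have : |u t * (E - 1) + h * a₂₁ * f t (u t)| ≤ h*(2*U + |a₂₁| *F) := by linarith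
        linarith
      have h11 : |f (t + c₂*h) Sw - f t (u t)| < ε₁ := by
        refine hdistf (t+c₂*h, Sw) (t, u t) (hmemK' Sw hSwB) (hmemK (u t) (by linarith)) ?_
        rw [Prod.dist_eq]
        refine max_lt hc2δ' ?_
        rw [Real.dist_eq]
        exact hSww
      -- (10): integral consistency bound
      have h10 : |u (t + h) - u t - h * f t (u t)| ≤ h * ε₁ := by
        have htth : t ≤ t + h := by linarith [hh0.le]
        have hsub : Set.uIcc t (t+h) ⊆ Set.Icc a b := by
          rw [Set.uIcc_of_le htth]
          exact Set.Icc_subset_Icc htmem.1 ht1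
        have hInt : IntervalIntegrable (fun s => f s (u s)) MeasureTheory.volume t (t+h) :=
          (hgc.mono hsub).intervalIntegrable
        have heq : ∫ s in t..(t+h), f s (u s) = u (t+h) - u t :=
          intervalIntegral.integral_eq_sub_of_hasDerivAt (fun s hs => hu s (hsub hs)) hInt
        have heq2 : u (t+h) - u t - h * f t (u t) = ∫ s in t..(t+h), (f s (u s) - f t (u t)) := by
          rw [intervalIntegral.integral_sub hInt intervalIntegrable_const, heq,
            intervalIntegral.integral_const]
          simp
        rw [heq2]
        have hbnd : ∀ s ∈ Set.uIoc t (t+h), ‖f s (u s) - f t (u t)‖ ≤ ε₁ := by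
          intro s hs
          rw [Set.uIoc_of_le htth] at hs
          have hs' : s ∈ Set.Icc a b := ⟨by linarith [hs.1, htmem.1], by linarith [hs.2]⟩
          have hst : |s - t| ≤ h := by
            rw [abs_of_nonneg (by linarith [hs.1])]
            linarith [hs.2]
          have hus : |u s - u t| < δ := by
            have := hδu s hs' t htmem (by rw [Real.dist_eq]; linarith)
            rwa [Real.dist_eq] at this
          have := hdistf (s, u s) (t, u t)
            ⟨⟨by linarith [hs'.1], by linarith [hs'.2]⟩,
              by
                have h2' := abs_le.mp (hUb s hs')
                exact ⟨by linarith [h2'.1], by linarith [h2'.2]⟩⟩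
            (hmemK (u t) (by linarith))
            (by
              rw [Prod.dist_eq]
              refine max_lt ?_ ?_
              · rw [Real.dist_eq]; linarith
              · rw [Real.dist_eq]; exact hus)
          rw [Real.norm_eq_abs]
          exact this.le
        calc ‖∫ s in t..(t+h), (f s (u s) - f t (u t))‖ ≤ ε₁ * |(t+h) - t| :=
              intervalIntegral.norm_integral_le_of_norm_le_const hbnd
          _ = h * ε₁ := by
              have : (t+h) - t = h := by ring
              rw [this, abs_of_pos hh0]; ring
      -- Lipschitz pieces
      have hA : |f t (v n) - f t (u t)| ≤ L' * |v n - u t| := hlip' t htmem (v n) (u t)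
      have hSS : |Sv - Sw| ≤ (3 + |a₂₁| *L') * |v n - u t| := by
        have hid : Sv - Sw = (v n - u t)*E + h*a₂₁*(f t (v n) - f t (u t)) := by
          rw [hSvdef, hSwdef]; ring
        rw [hid]
        have h1 : |(v n - u t)*E + h*a₂₁*(f t (v n) - f t (u t))| ≤
            |v n - u t| * |E| + h*(|a₂₁| * |f t (v n) - f t (u t)|) := by
          calc |(v n - u t)*E + h*a₂₁*(f t (v n) - f t (u t))| ≤
              |(v n - u t)*E| + |h*a₂₁*(f t (v n) - f t (u t))| := abs_add_le _ _
            _ = |v n - u t| * |E| + h*(|a₂₁| * |f t (v n) - f t (u t)|) := by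
                rw [abs_mul, abs_mul, abs_mul, abs_of_pos hh0]; ring
        have h2 : |v n - u t| * |E| ≤ |v n - u t| *3 :=
          mul_le_mul_of_nonneg_left hEabs (abs_nonneg _)
        have h3 : h*(|a₂₁| * |f t (v n) - f t (u t)|) ≤ 1*(|a₂₁| *(L' * |v n - u t|)) :=
          mul_le_mul hh1 (mul_le_mul_of_nonneg_left hA (abs_nonneg _))
            (mul_nonneg (abs_nonneg _) (abs_nonneg _)) zero_le_one
        linarith
      have hBv : |f (t+c₂*h) Sv - f (t+c₂*h) Sw| ≤
          L'*((3+|a₂₁| *L') * |v n - u t|) + 2*ε₁ := by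
        have t2 : |f t Sv - f t Sw| ≤ L' * |Sv - Sw| := hlip' t htmem Sv Sw
        have t3 : |f t Sw - f (t+c₂*h) Sw| = |f (t+c₂*h) Sw - f t Sw| := abs_sub_comm _ _
        have tri : |f (t+c₂*h) Sv - f (t+c₂*h) Sw| ≤
            |f (t+c₂*h) Sv - f t Sv| + |f t Sv - f t Sw| + |f t Sw - f (t+c₂*h) Sw| := by
          calc |f (t+c₂*h) Sv - f (t+c₂*h) Sw| ≤
              |f (t+c₂*h) Sv - f t Sw| + |f t Sw - f (t+c₂*h) Sw| := abs_sub_le _ _ _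
            _ ≤ (|f (t+c₂*h) Sv - f t Sv| + |f t Sv - f t Sw|) + |f t Sw - f (t+c₂*h) Sw| := by
                have := abs_sub_le (f (t+c₂*h) Sv) (f t Sv) (f t Sw)
                linarith
        have h2' : L' * |Sv - Sw| ≤ L'*((3+|a₂₁| *L') * |v n - u t|) :=
          mul_le_mul_of_nonneg_left hSS hL'0
        rw [t3] at tri
        linarith
      -- the one-step recursion estimate
      have hid : v (n+1) - u (t + h) =
          (v n - u t) + h*b₁*(f t (v n) - f t (u t))
          + h*b₂*(f (t+c₂*h) Sv - f (t+c₂*h) Sw)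
          + h*b₂*(f (t+c₂*h) Sw - f t (u t))
          + h*(b₁+b₂-1)*(f t (u t))
          - (u (t+h) - u t - h * f t (u t)) := by
        rw [hrecn]; ring
      have hid2 : v (n+1) - u (t + h) =
          (v n - u t) + h*b₁*(f t (v n) - f t (u t))
          + h*b₂*(f (t+c₂*h) Sv - f (t+c₂*h) Sw)
          + h*b₂*(f (t+c₂*h) Sw - f t (u t))
          - (u (t+h) - u t - h * f t (u t)) := by
        rw [hid, hb]; ring
      have htri : |v (n+1) - u (t + h)| ≤
          |v n - u t| + h* |b₁| * |f t (v n) - f t (u t)|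
          + h* |b₂| * |f (t+c₂*h) Sv - f (t+c₂*h) Sw|
          + h* |b₂| * |f (t+c₂*h) Sw - f t (u t)|
          + |u (t+h) - u t - h * f t (u t)| := by
        rw [hid2]
        have T : ∀ x₁ x₂ x₃ x₄ x₅ : ℝ, |x₁ + x₂ + x₃ + x₄ - x₅| ≤
            |x₁| + |x₂| + |x₃| + |x₄| + |x₅| := by
          intro x₁ x₂ x₃ x₄ x₅
          have e0 : x₁ + x₂ + x₃ + x₄ - x₅ = (x₁+x₂+x₃+x₄) + (-x₅) := by ring
          rw [e0]
          have h1 := abs_add_le (x₁+x₂+x₃+x₄) (-x₅)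
          have h2 := abs_add_le (x₁+x₂+x₃) x₄
          have h3 := abs_add_le (x₁+x₂) x₃
          have h4 := abs_add_le x₁ x₂
          rw [abs_neg] at h1
          linarith
        have := T (v n - u t) (h*b₁*(f t (v n) - f t (u t)))
          (h*b₂*(f (t+c₂*h) Sv - f (t+c₂*h) Sw)) (h*b₂*(f (t+c₂*h) Sw - f t (u t)))
          (u (t+h) - u t - h * f t (u t))
        have e1 : |h*b₁*(f t (v n) - f t (u t))| = h* |b₁| * |f t (v n) - f t (u t)| := by
          rw [abs_mul, abs_mul, abs_of_pos hh0]
        have e2 : |h*b₂*(f (t+c₂*h) Sv - f (t+c₂*h) Sw)| =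
            h* |b₂| * |f (t+c₂*h) Sv - f (t+c₂*h) Sw| := by
          rw [abs_mul, abs_mul, abs_of_pos hh0]
        have e3 : |h*b₂*(f (t+c₂*h) Sw - f t (u t))| =
            h* |b₂| * |f (t+c₂*h) Sw - f t (u t)| := by
          rw [abs_mul, abs_mul, abs_of_pos hh0]
        rw [e1, e2, e3] at this
        exact this
      have hstep : |v (n+1) - u (t + h)| ≤ (1 + h*Λ) * |v n - u t| + h*ε₂ := by
        have m1 : h* |b₁| * |f t (v n) - f t (u t)| ≤ h*(|b₁| *(L'* |v n - u t|)) := by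
          have := mul_le_mul_of_nonneg_left hA (abs_nonneg b₁)
          have := mul_le_mul_of_nonneg_left this hh0.le
          linarith [this, mul_assoc h |b₁| |f t (v n) - f t (u t)|]
        have m2 : h* |b₂| * |f (t+c₂*h) Sv - f (t+c₂*h) Sw| ≤
            h*(|b₂| *(L'*((3+|a₂₁| *L') * |v n - u t|) + 2*ε₁)) := by
          have := mul_le_mul_of_nonneg_left hBv (abs_nonneg b₂)
          have := mul_le_mul_of_nonneg_left this hh0.le
          linarith [this, mul_assoc h |b₂| |f (t+c₂*h) Sv - f (t+c₂*h) Sw|]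
        have m3 : h* |b₂| * |f (t+c₂*h) Sw - f t (u t)| ≤ h*(|b₂| *ε₁) := by
          have := mul_le_mul_of_nonneg_left h11.le (abs_nonneg b₂)
          have := mul_le_mul_of_nonneg_left this hh0.le
          linarith [this, mul_assoc h |b₂| |f (t+c₂*h) Sw - f t (u t)|]
        have mΛ : h*(|b₁| *(L'* |v n - u t|)) + h*(|b₂| *(L'*((3+|a₂₁| *L') * |v n - u t|))) ≤
            h*((Λ-1)* |v n - u t|) := by
          have hco : |b₁| *(L'* |v n - u t|) + |b₂| *(L'*((3+|a₂₁| *L') * |v n - u t|)) =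
              ((|b₁| + |b₂| *(3+|a₂₁| *L'))*L') * |v n - u t| := by ring
          have hΛe : (|b₁| + |b₂| *(3+|a₂₁| *L'))*L' = Λ - 1 := by rw [hΛdef]; ring
          rw [← mul_add, hco, hΛe]
        have hεs : h*(|b₂| *(2*ε₁)) + h*(|b₂| *ε₁) + h*ε₁ ≤ h*ε₂ := by
          have : |b₂| *(2*ε₁) + |b₂| *ε₁ + ε₁ = (1+3* |b₂|)*ε₁ := by ring
          rw [← mul_add, ← mul_add, this, hε₁₂]
        have hfin : (1 + h*(Λ-1)) * |v n - u t| ≤ (1 + h*Λ) * |v n - u t| := by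
          have h0' : (0:ℝ) ≤ h * |v n - u t| := mul_nonneg hh0.le (abs_nonneg _)
          have he' : (1 + h*Λ) * |v n - u t| - (1 + h*(Λ-1)) * |v n - u t| = h * |v n - u t| := by
            ring
          linarith
        linarith [htri, m1, m2, m3, mΛ, hεs, h10, hfin]
      -- conclude via the recursion on the majorant
      have hcast : a + ((n:ℕ)+1 : ℕ) * h = t + h := by
        rw [htdef]; push_cast; ring
      have hPn : (1:ℝ) ≤ (1+h*Λ)^(n+1) := one_le_pow₀ hP1
      calc |v (n+1) - u (a + ((n+1:ℕ)) * h)| = |v (n+1) - u (t + h)| := by rw [hcast]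
        _ ≤ (1 + h*Λ) * |v n - u t| + h*ε₂ := hstep
        _ ≤ (1 + h*Λ) * (ε₂ * n * h * (1 + h*Λ)^n) + h*ε₂ := by
            linarith [mul_le_mul_of_nonneg_left ihn (by linarith : (0:ℝ) ≤ 1 + h*Λ)]
        _ ≤ ε₂ * ((n+1:ℕ)) * h * (1 + h*Λ)^(n+1) := by
            push_cast
            have e1 : (1 + h*Λ) * (ε₂ * (n:ℝ) * h * (1 + h*Λ)^n) =
                ε₂ * (n:ℝ) * h * (1 + h*Λ)^(n+1) := by ring
            have e2 : ε₂ * ((n:ℝ)+1) * h * (1 + h*Λ)^(n+1) =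
                ε₂ * (n:ℝ) * h * (1 + h*Λ)^(n+1) + ε₂ * h * (1 + h*Λ)^(n+1) := by ring
            have e3 : h*ε₂ ≤ ε₂ * h * (1 + h*Λ)^(n+1) := by
              calc h*ε₂ = (ε₂*h)*1 := by ring
                _ ≤ (ε₂*h)*(1+h*Λ)^(n+1) :=
                    mul_le_mul_of_nonneg_left hPn (mul_nonneg hε₂0.le hh0.le)
                _ = ε₂ * h * (1 + h*Λ)^(n+1) := by ring
            linarith
  -- finish
  intro n hnN
  have h1 := (main n hnN).trans (hbound n hnN)
  have h2 : min ε 1 / 2 < ε := by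
    have := min_le_left ε 1; linarith
  linarith
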